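/- arXiv:2206.05673 — 5 statements merged into one kernel-verified Lean document; each statement's English description precedes it below -/
import Mathlib

section
/- Let I ⊆ ℝ be an open interval, let β, γ : I → ℝ be functions, let δ be a real constant, and let x, y, z : ℝ → ℝ be three times differentiable functions each of which satisfies the linear ODE u'''(t) + β(t)·u''(t) + γ(t)·u'(t) + δ·u(t) = 0 for all t ∈ I. Then for all t ∈ I, the Wronskian of the first derivatives satisfies W(x',y',z')(t) = -δ · W(x,y,z)(t). -/
/-- The Wronskian of three functions `x, y, z : ℝ → ℝ`: the determinant of the
3×3 matrix whose rows are the functions, their first derivatives, and their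
second derivatives. -/
noncomputable def W3 (x y z : ℝ → ℝ) (t : ℝ) : ℝ :=
  Matrix.det !![x t, y t, z t;
    deriv x t, deriv y t, deriv z t;
    deriv (deriv x) t, deriv (deriv y) t, deriv (deriv z) t]

/-- A function `f : ℝ → ℝ` is three times differentiable. -/
def ThriceDiff (f : ℝ → ℝ) : Prop :=
  Differentiable ℝ f ∧ Differentiable ℝ (deriv f) ∧ Differentiable ℝ (deriv (deriv f))

theorem stmt_0 (I : Set ℝ) (hIopen : IsOpen I) (hIinterval : I.OrdConnected)
    (β γ : ℝ → ℝ) (δ : ℝ) (x y z : ℝ → ℝ)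
    (hx : ThriceDiff x) (hy : ThriceDiff y) (hz : ThriceDiff z)
    (hxode : ∀ t ∈ I, deriv (deriv (deriv x)) t + β t * deriv (deriv x) t
      + γ t * deriv x t + δ * x t = 0)
    (hyode : ∀ t ∈ I, deriv (deriv (deriv y)) t + β t * deriv (deriv y) t
      + γ t * deriv y t + δ * y t = 0)
    (hzode : ∀ t ∈ I, deriv (deriv (deriv z)) t + β t * deriv (deriv z) t
      + γ t * deriv z t + δ * z t = 0) :
    ∀ t ∈ I, W3 (deriv x) (deriv y) (deriv z) t = -δ * W3 x y z t := by
  intro t ht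
  have hx3 : deriv (deriv (deriv x)) t
      = -(β t * deriv (deriv x) t + γ t * deriv x t + δ * x t) := by
    linarith [hxode t ht]
  have hy3 : deriv (deriv (deriv y)) t
      = -(β t * deriv (deriv y) t + γ t * deriv y t + δ * y t) := by
    linarith [hyode t ht]
  have hz3 : deriv (deriv (deriv z)) t
      = -(β t * deriv (deriv z) t + γ t * deriv z t + δ * z t) := by
    linarith [hzode t ht]
  simp [W3, Matrix.det_fin_three, hx3, hy3, hz3]
  ring
end

section
/- (Theorem 2.1) Let I ⊆ ℝ be an open interval, let γ : I → ℝ be a function, let δ be a nonzero real constant, let F : ℝ × ℝ → ℝ be a function, and let x, y, z : ℝ → ℝ be three times differentiable functions each of which satisfies u'''(t) + γ(t)·u'(t) + δ·u(t) = 0 for all t ∈ I, with W(x,y,z)(t) ≠ 0 for all t ∈ I. Fix t₀ ∈ I and let C₀ = W(x,y,z)(t₀). If F(C₀, -δ·C₀) = 0, then F(W(x,y,z)(t), W(x',y',z')(t)) = 0 for all t ∈ I. -/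
theorem stmt_4 (I : Set ℝ) (hIopen : IsOpen I) (hIinterval : I.OrdConnected)
    (γ : ℝ → ℝ) (δ : ℝ) (hδ : δ ≠ 0) (F : ℝ × ℝ → ℝ) (x y z : ℝ → ℝ)
    (hx : ThriceDiff x) (hy : ThriceDiff y) (hz : ThriceDiff z)
    (hxode : ∀ t ∈ I, deriv (deriv (deriv x)) t + γ t * deriv x t + δ * x t = 0)
    (hyode : ∀ t ∈ I, deriv (deriv (deriv y)) t + γ t * deriv y t + δ * y t = 0)
    (hzode : ∀ t ∈ I, deriv (deriv (deriv z)) t + γ t * deriv z t + δ * z t = 0)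
    (hne : ∀ t ∈ I, W3 x y z t ≠ 0)
    (t₀ : ℝ) (ht₀ : t₀ ∈ I)
    (hF : F (W3 x y z t₀, -δ * W3 x y z t₀) = 0) :
    ∀ t ∈ I, F (W3 x y z t, W3 (deriv x) (deriv y) (deriv z) t) = 0 := by
  have hWeq : W3 x y z = fun s =>
      x s * deriv y s * deriv (deriv z) s - x s * deriv z s * deriv (deriv y) s
      - y s * deriv x s * deriv (deriv z) s + y s * deriv z s * deriv (deriv x) s
      + z s * deriv x s * deriv (deriv y) s - z s * deriv y s * deriv (deriv x) s := by
    funext s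
    simp [W3, Matrix.det_fin_three]
  have hW : ∀ t : ℝ, HasDerivAt (W3 x y z)
      (deriv x t * deriv y t * deriv (deriv z) t
        + x t * deriv (deriv y) t * deriv (deriv z) t
        + x t * deriv y t * deriv (deriv (deriv z)) t
      - (deriv x t * deriv z t * deriv (deriv y) t
        + x t * deriv (deriv z) t * deriv (deriv y) t
        + x t * deriv z t * deriv (deriv (deriv y)) t)
      - (deriv y t * deriv x t * deriv (deriv z) t
        + y t * deriv (deriv x) t * deriv (deriv z) t
        + y t * deriv x t * deriv (deriv (deriv z)) t)
      + (deriv y t * deriv z t * deriv (deriv x) t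
        + y t * deriv (deriv z) t * deriv (deriv x) t
        + y t * deriv z t * deriv (deriv (deriv x)) t)
      + (deriv z t * deriv x t * deriv (deriv y) t
        + z t * deriv (deriv x) t * deriv (deriv y) t
        + z t * deriv x t * deriv (deriv (deriv y)) t)
      - (deriv z t * deriv y t * deriv (deriv x) t
        + z t * deriv (deriv y) t * deriv (deriv x) t
        + z t * deriv y t * deriv (deriv (deriv x)) t)) t := by
    intro t
    rw [hWeq]
    have X0 := (hx.1 t).hasDerivAt
    have X1 := (hx.2.1 t).hasDerivAt
    have X2 := (hx.2.2 t).hasDerivAt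
    have Y0 := (hy.1 t).hasDerivAt
    have Y1 := (hy.2.1 t).hasDerivAt
    have Y2 := (hy.2.2 t).hasDerivAt
    have Z0 := (hz.1 t).hasDerivAt
    have Z1 := (hz.2.1 t).hasDerivAt
    have Z2 := (hz.2.2 t).hasDerivAt
    have h1 := ((X0.mul Y1).mul Z2)
    have h2 := ((X0.mul Z1).mul Y2)
    have h3 := ((Y0.mul X1).mul Z2)
    have h4 := ((Y0.mul Z1).mul X2)
    have h5 := ((Z0.mul X1).mul Y2)
    have h6 := ((Z0.mul Y1).mul X2)
    refine (((((h1.sub h2).sub h3).add h4).add h5).sub h6).congr_deriv ?_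
    simp only [Pi.mul_apply]
    ring
  have hW0 : ∀ t ∈ I, HasDerivAt (W3 x y z) 0 t := by
    intro t ht
    have hx3 : deriv (deriv (deriv x)) t = -(γ t * deriv x t) - δ * x t := by
      have := hxode t ht; linarith
    have hy3 : deriv (deriv (deriv y)) t = -(γ t * deriv y t) - δ * y t := by
      have := hyode t ht; linarith
    have hz3 : deriv (deriv (deriv z)) t = -(γ t * deriv z t) - δ * z t := by
      have := hzode t ht; linarith
    have := hW t
    rw [hx3, hy3, hz3] at this
    convert this using 1
    ring
  have hconv : Convex ℝ I := convex_iff_ordConnected.mpr hIinterval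
  have hdiff : DifferentiableOn ℝ (W3 x y z) I :=
    fun s _ => ((hW s).differentiableAt).differentiableWithinAt
  have hconst : ∀ t ∈ I, W3 x y z t = W3 x y z t₀ := by
    intro t ht
    apply hconv.is_const_of_fderivWithin_eq_zero hdiff _ ht ht₀
    intro s hs
    rw [fderivWithin_of_isOpen hIopen hs]
    rw [← toSpanSingleton_deriv, (hW0 s hs).deriv]
    ext v
    simp
  have hWd : ∀ t ∈ I, W3 (deriv x) (deriv y) (deriv z) t = -δ * W3 x y z t := by
    intro t ht
    have hx3 : deriv (deriv (deriv x)) t = -(γ t * deriv x t) - δ * x t := by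
      have := hxode t ht; linarith
    have hy3 : deriv (deriv (deriv y)) t = -(γ t * deriv y t) - δ * y t := by
      have := hyode t ht; linarith
    have hz3 : deriv (deriv (deriv z)) t = -(γ t * deriv z t) - δ * z t := by
      have := hzode t ht; linarith
    have hWdeq : W3 (deriv x) (deriv y) (deriv z) t =
        deriv x t * deriv (deriv y) t * deriv (deriv (deriv z)) t
        - deriv x t * deriv (deriv z) t * deriv (deriv (deriv y)) t
        - deriv y t * deriv (deriv x) t * deriv (deriv (deriv z)) t
        + deriv y t * deriv (deriv z) t * deriv (deriv (deriv x)) t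
        + deriv z t * deriv (deriv x) t * deriv (deriv (deriv y)) t
        - deriv z t * deriv (deriv y) t * deriv (deriv (deriv x)) t := by
      simp [W3, Matrix.det_fin_three]
    rw [hWdeq, hWeq, hx3, hy3, hz3]
    ring
  intro t ht
  rw [hWd t ht, hconst t ht, hF]
end

section
/- (Proposition 3.1) Let I ⊆ ℝ be an open interval, let γ : I → ℝ be a function, let δ be a nonzero real constant, and let x, y, z : ℝ → ℝ be three times differentiable functions each of which satisfies u'''(t) + γ(t)·u'(t) + δ·u(t) = 0 for all t ∈ I, with W(x,y,z)(t) ≠ 0 for all t ∈ I. Fix t₀ ∈ I and set α = -δ / W(x,y,z)(t₀). Then the triple (x, y, z) satisfies the Tzitzeica curve equation: W(x',y',z')(t) = α · (W(x,y,z)(t))² for all t ∈ I. -/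
lemma hasDerivAt_mul3 {f g h : ℝ → ℝ} {f' g' h' t : ℝ}
    (hf : HasDerivAt f f' t) (hg : HasDerivAt g g' t) (hh : HasDerivAt h h' t) :
    HasDerivAt (fun s => f s * g s * h s) ((f' * g t + f t * g') * h t + f t * g t * h') t :=
  (hf.mul hg).mul hh

theorem stmt_6 (I : Set ℝ) (hIopen : IsOpen I) (hIinterval : I.OrdConnected)
    (γ : ℝ → ℝ) (δ : ℝ) (hδ : δ ≠ 0) (x y z : ℝ → ℝ)
    (hx : ThriceDiff x) (hy : ThriceDiff y) (hz : ThriceDiff z)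
    (hxode : ∀ t ∈ I, deriv (deriv (deriv x)) t + γ t * deriv x t + δ * x t = 0)
    (hyode : ∀ t ∈ I, deriv (deriv (deriv y)) t + γ t * deriv y t + δ * y t = 0)
    (hzode : ∀ t ∈ I, deriv (deriv (deriv z)) t + γ t * deriv z t + δ * z t = 0)
    (hne : ∀ t ∈ I, W3 x y z t ≠ 0)
    (t₀ : ℝ) (ht₀ : t₀ ∈ I) (α : ℝ) (hα : α = -δ / W3 x y z t₀) :
    ∀ t ∈ I, W3 (deriv x) (deriv y) (deriv z) t = α * (W3 x y z t) ^ 2 := by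
  obtain ⟨hx0, hx1, hx2⟩ := hx
  obtain ⟨hy0, hy1, hy2⟩ := hy
  obtain ⟨hz0, hz1, hz2⟩ := hz
  have hWeq : W3 x y z = fun s =>
      x s * deriv y s * deriv (deriv z) s - x s * deriv z s * deriv (deriv y) s
      - y s * deriv x s * deriv (deriv z) s + y s * deriv z s * deriv (deriv x) s
      + z s * deriv x s * deriv (deriv y) s - z s * deriv y s * deriv (deriv x) s := by
    funext s
    simp [W3, Matrix.det_fin_three]
  -- derivative of W3 is zero on I
  have key : ∀ t ∈ I, HasDerivAt (W3 x y z) 0 t := by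
    intro t ht
    have hX0 := (hx0 t).hasDerivAt
    have hX1 := (hx1 t).hasDerivAt
    have hX2 := (hx2 t).hasDerivAt
    have hY0 := (hy0 t).hasDerivAt
    have hY1 := (hy1 t).hasDerivAt
    have hY2 := (hy2 t).hasDerivAt
    have hZ0 := (hz0 t).hasDerivAt
    have hZ1 := (hz1 t).hasDerivAt
    have hZ2 := (hz2 t).hasDerivAt
    have hD := (((((hasDerivAt_mul3 hX0 hY1 hZ2).sub (hasDerivAt_mul3 hX0 hZ1 hY2)).sub
        (hasDerivAt_mul3 hY0 hX1 hZ2)).add (hasDerivAt_mul3 hY0 hZ1 hX2)).add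
        (hasDerivAt_mul3 hZ0 hX1 hY2)).sub (hasDerivAt_mul3 hZ0 hY1 hX2)
    rw [hWeq]
    refine hD.congr_deriv ?_
    have ex : deriv (deriv (deriv x)) t = -(γ t * deriv x t + δ * x t) := by
      linarith [hxode t ht]
    have ey : deriv (deriv (deriv y)) t = -(γ t * deriv y t + δ * y t) := by
      linarith [hyode t ht]
    have ez : deriv (deriv (deriv z)) t = -(γ t * deriv z t + δ * z t) := by
      linarith [hzode t ht]
    rw [ex, ey, ez]; ring
  have hconv : Convex ℝ I := convex_iff_ordConnected.mpr hIinterval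
  have hconst : ∀ t ∈ I, W3 x y z t = W3 x y z t₀ := by
    intro t ht
    refine hconv.is_const_of_fderivWithin_eq_zero
      (fun s hs => ((key s hs).differentiableAt).differentiableWithinAt) ?_ ht ht₀
    intro s hs
    rw [fderivWithin_of_isOpen hIopen hs]
    have := (key s hs).hasFDerivAt.fderiv
    rw [this]
    ext v
    simp
  intro t ht
  have hWd : W3 (deriv x) (deriv y) (deriv z) t = -δ * W3 x y z t := by
    have ex : deriv (deriv (deriv x)) t = -(γ t * deriv x t + δ * x t) := by
      linarith [hxode t ht]
    have ey : deriv (deriv (deriv y)) t = -(γ t * deriv y t + δ * y t) := by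
      linarith [hyode t ht]
    have ez : deriv (deriv (deriv z)) t = -(γ t * deriv z t + δ * z t) := by
      linarith [hzode t ht]
    simp only [W3, Matrix.det_fin_three]
    norm_num [Matrix.cons_val_zero, Matrix.cons_val_one, Matrix.cons_val_two, Matrix.tail_cons, Matrix.head_cons]
    rw [ex, ey, ez]; ring
  rw [hWd, hconst t ht, hα]
  field_simp [hne t₀ ht₀]
end

section
/- Let a be a nonzero real number and define x(t) = exp(-a·t), y(t) = exp(a·t/2)·cos(√3·a·t/2), z(t) = exp(a·t/2)·sin(√3·a·t/2) for t ∈ ℝ. Then each of x, y, z satisfies the ODE u'''(t) + a³·u(t) = 0 for all t ∈ ℝ, and the triple (x, y, z) satisfies the Tzitzeica curve equation W(x',y',z')(t) = -(2√3/9) · (W(x,y,z)(t))² for all t ∈ ℝ. -/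
noncomputable def x₇ (a : ℝ) : ℝ → ℝ := fun t => Real.exp (-a * t)
noncomputable def y₇ (a : ℝ) : ℝ → ℝ := fun t =>
  Real.exp (a * t / 2) * Real.cos (Real.sqrt 3 * a * t / 2)
noncomputable def z₇ (a : ℝ) : ℝ → ℝ := fun t =>
  Real.exp (a * t / 2) * Real.sin (Real.sqrt 3 * a * t / 2)

section aux

private lemma hs3 : Real.sqrt 3 ^ 2 = 3 := Real.sq_sqrt (by norm_num)

private lemma hdx (a t : ℝ) : HasDerivAt (x₇ a) (-a * x₇ a t) t := by
  have h : HasDerivAt (fun t : ℝ => -a * t) (-a) t := by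
    simpa using (hasDerivAt_id t).const_mul (-a)
  have h2 := h.exp
  show HasDerivAt (fun t => Real.exp (-a * t)) (-a * Real.exp (-a * t)) t
  convert h2 using 1
  ring

private lemma hde (a t : ℝ) :
    HasDerivAt (fun t => Real.exp (a * t / 2)) (a / 2 * Real.exp (a * t / 2)) t := by
  have h : HasDerivAt (fun t : ℝ => a * t / 2) (a / 2) t := by
    simpa using ((hasDerivAt_id t).const_mul a).div_const 2
  simpa [mul_comm] using h.exp

private lemma hdc (a t : ℝ) :
    HasDerivAt (fun t => Real.cos (Real.sqrt 3 * a * t / 2))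
      (-(Real.sqrt 3 * a / 2) * Real.sin (Real.sqrt 3 * a * t / 2)) t := by
  have h : HasDerivAt (fun t : ℝ => Real.sqrt 3 * a * t / 2) (Real.sqrt 3 * a / 2) t := by
    simpa using ((hasDerivAt_id t).const_mul (Real.sqrt 3 * a)).div_const 2
  simpa [mul_comm] using h.cos

private lemma hds (a t : ℝ) :
    HasDerivAt (fun t => Real.sin (Real.sqrt 3 * a * t / 2))
      ((Real.sqrt 3 * a / 2) * Real.cos (Real.sqrt 3 * a * t / 2)) t := by
  have h : HasDerivAt (fun t : ℝ => Real.sqrt 3 * a * t / 2) (Real.sqrt 3 * a / 2) t := by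
    simpa using ((hasDerivAt_id t).const_mul (Real.sqrt 3 * a)).div_const 2
  simpa [mul_comm] using h.sin

private lemma hdy (a t : ℝ) :
    HasDerivAt (y₇ a) (a / 2 * y₇ a t - Real.sqrt 3 * a / 2 * z₇ a t) t := by
  have h := (hde a t).mul (hdc a t)
  have : HasDerivAt (y₇ a)
      (a / 2 * Real.exp (a * t / 2) * Real.cos (Real.sqrt 3 * a * t / 2) +
        Real.exp (a * t / 2) * (-(Real.sqrt 3 * a / 2) * Real.sin (Real.sqrt 3 * a * t / 2))) t := by
    exact h
  convert this using 1
  simp only [y₇, z₇]; ring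

private lemma hdz (a t : ℝ) :
    HasDerivAt (z₇ a) (Real.sqrt 3 * a / 2 * y₇ a t + a / 2 * z₇ a t) t := by
  have h := (hde a t).mul (hds a t)
  have : HasDerivAt (z₇ a)
      (a / 2 * Real.exp (a * t / 2) * Real.sin (Real.sqrt 3 * a * t / 2) +
        Real.exp (a * t / 2) * ((Real.sqrt 3 * a / 2) * Real.cos (Real.sqrt 3 * a * t / 2))) t := by
    exact h
  convert this using 1
  simp only [y₇, z₇]; ring

private lemma dX (a : ℝ) : deriv (x₇ a) = fun t => -a * x₇ a t :=
  funext fun t => (hdx a t).deriv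

private lemma dY (a : ℝ) : deriv (y₇ a) = fun t => a / 2 * y₇ a t - Real.sqrt 3 * a / 2 * z₇ a t :=
  funext fun t => (hdy a t).deriv

private lemma dZ (a : ℝ) : deriv (z₇ a) = fun t => Real.sqrt 3 * a / 2 * y₇ a t + a / 2 * z₇ a t :=
  funext fun t => (hdz a t).deriv

private lemma ddX (a : ℝ) : deriv (deriv (x₇ a)) = fun t => a ^ 2 * x₇ a t := by
  rw [dX]; funext t
  rw [((hdx a t).const_mul (-a)).deriv]; ring

private lemma ddY (a : ℝ) : deriv (deriv (y₇ a)) =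
    fun t => -(a ^ 2 / 2) * y₇ a t - Real.sqrt 3 * a ^ 2 / 2 * z₇ a t := by
  rw [dY]; funext t
  rw [(((hdy a t).const_mul (a / 2)).fun_sub ((hdz a t).const_mul (Real.sqrt 3 * a / 2))).deriv]
  linear_combination (-(a ^ 2 / 4) * y₇ a t) * hs3

private lemma ddZ (a : ℝ) : deriv (deriv (z₇ a)) =
    fun t => Real.sqrt 3 * a ^ 2 / 2 * y₇ a t - a ^ 2 / 2 * z₇ a t := by
  rw [dZ]; funext t
  rw [(((hdy a t).const_mul (Real.sqrt 3 * a / 2)).fun_add ((hdz a t).const_mul (a / 2))).deriv]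
  linear_combination (-(a ^ 2 / 4) * z₇ a t) * hs3

private lemma dddX (a : ℝ) : deriv (deriv (deriv (x₇ a))) = fun t => -a ^ 3 * x₇ a t := by
  rw [ddX]; funext t
  rw [((hdx a t).const_mul (a ^ 2)).deriv]; ring

private lemma dddY (a : ℝ) : deriv (deriv (deriv (y₇ a))) = fun t => -a ^ 3 * y₇ a t := by
  rw [ddY]; funext t
  rw [(((hdy a t).const_mul (-(a ^ 2 / 2))).fun_sub
    ((hdz a t).const_mul (Real.sqrt 3 * a ^ 2 / 2))).deriv]
  linear_combination (-(a ^ 3 / 4) * y₇ a t) * hs3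

private lemma dddZ (a : ℝ) : deriv (deriv (deriv (z₇ a))) = fun t => -a ^ 3 * z₇ a t := by
  rw [ddZ]; funext t
  rw [(((hdy a t).const_mul (Real.sqrt 3 * a ^ 2 / 2)).fun_sub
    ((hdz a t).const_mul (a ^ 2 / 2))).deriv]
  linear_combination (-(a ^ 3 / 4) * z₇ a t) * hs3

private lemma hXYZ (a t : ℝ) : x₇ a t * (y₇ a t ^ 2 + z₇ a t ^ 2) = 1 := by
  have h := Real.cos_sq_add_sin_sq (Real.sqrt 3 * a * t / 2)
  have he : Real.exp (-a * t) * Real.exp (a * t / 2) ^ 2 = 1 := by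
    rw [sq, ← Real.exp_add, ← Real.exp_add]
    norm_num
  simp only [x₇, y₇, z₇]
  linear_combination (Real.exp (-a * t) * Real.exp (a * t / 2) ^ 2) * h + he

private lemma Wval (a t : ℝ) : W3 (x₇ a) (y₇ a) (z₇ a) t = 3 * Real.sqrt 3 / 2 * a ^ 3 := by
  rw [W3, ddX, ddY, ddZ, dX, dY, dZ]
  simp [Matrix.det_fin_three]
  linear_combination (3 * Real.sqrt 3 * a ^ 3 / 2) * hXYZ a t

private lemma Wval' (a t : ℝ) :
    W3 (deriv (x₇ a)) (deriv (y₇ a)) (deriv (z₇ a)) t = -(3 * Real.sqrt 3 / 2) * a ^ 6 := by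
  rw [W3, dddX, dddY, dddZ, ddX, ddY, ddZ, dX, dY, dZ]
  simp [Matrix.det_fin_three]
  linear_combination (-(3 * Real.sqrt 3 * a ^ 6) / 2) * hXYZ a t

end aux

theorem stmt_7 (a : ℝ) (ha : a ≠ 0) :
    (∀ t : ℝ, deriv (deriv (deriv (x₇ a))) t + a ^ 3 * x₇ a t = 0) ∧
    (∀ t : ℝ, deriv (deriv (deriv (y₇ a))) t + a ^ 3 * y₇ a t = 0) ∧
    (∀ t : ℝ, deriv (deriv (deriv (z₇ a))) t + a ^ 3 * z₇ a t = 0) ∧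
    (∀ t : ℝ, W3 (deriv (x₇ a)) (deriv (y₇ a)) (deriv (z₇ a)) t
      = -(2 * Real.sqrt 3 / 9) * (W3 (x₇ a) (y₇ a) (z₇ a) t) ^ 2) := by
  refine ⟨fun t => ?_, fun t => ?_, fun t => ?_, fun t => ?_⟩
  · rw [dddX]; ring
  · rw [dddY]; ring
  · rw [dddZ]; ring
  · rw [Wval, Wval']
    linear_combination (Real.sqrt 3 / 2 * a ^ 6) * hs3
end

section
/- Let v₁, v₂ be nonzero real numbers with v₂ ≠ v₁, v₂ ≠ -2v₁, and v₂ ≠ -v₁/2, and define x(t) = exp(v₁·t), y(t) = exp(v₂·t), z(t) = exp(-(v₁+v₂)·t) for t ∈ ℝ. Then the triple (x, y, z) satisfies the Tzitzeica curve equation W(x',y',z')(t) = α · (W(x,y,z)(t))² for all t ∈ ℝ, with α = -v₁v₂(v₁+v₂) / ((v₂-v₁)(2v₁+v₂)(v₁+2v₂)). -/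
noncomputable def x₉ (v₁ : ℝ) : ℝ → ℝ := fun t => Real.exp (v₁ * t)
noncomputable def y₉ (v₂ : ℝ) : ℝ → ℝ := fun t => Real.exp (v₂ * t)
noncomputable def z₉ (v₁ v₂ : ℝ) : ℝ → ℝ := fun t => Real.exp (-(v₁ + v₂) * t)

lemma dexp9 (a c : ℝ) :
    deriv (fun t => a * Real.exp (c * t)) = fun t => a * c * Real.exp (c * t) := by
  funext t
  have h : HasDerivAt (fun t : ℝ => c * t) c t := by
    simpa using (hasDerivAt_id t).const_mul c
  have : HasDerivAt (fun t => a * Real.exp (c * t)) (a * c * Real.exp (c * t)) t := by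
    have := (h.exp).const_mul a
    simpa [mul_comm, mul_assoc, mul_left_comm] using this
  exact this.deriv

theorem stmt_9 (v₁ v₂ : ℝ) (hv₁ : v₁ ≠ 0) (hv₂ : v₂ ≠ 0)
    (h₁ : v₂ ≠ v₁) (h₂ : v₂ ≠ -2 * v₁) (h₃ : v₂ ≠ -v₁ / 2) :
    ∀ t : ℝ, W3 (deriv (x₉ v₁)) (deriv (y₉ v₂)) (deriv (z₉ v₁ v₂)) t
      = (-(v₁ * v₂ * (v₁ + v₂)) / ((v₂ - v₁) * (2 * v₁ + v₂) * (v₁ + 2 * v₂)))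
        * (W3 (x₉ v₁) (y₉ v₂) (z₉ v₁ v₂) t) ^ 2 := by
  intro t
  have ha : v₂ - v₁ ≠ 0 := sub_ne_zero.mpr h₁
  have hb : 2 * v₁ + v₂ ≠ 0 := by intro h; apply h₂; linarith
  have hc : v₁ + 2 * v₂ ≠ 0 := by intro h; apply h₃; linarith
  set w : ℝ := -(v₁ + v₂) with hw
  have hx1 : deriv (x₉ v₁) = fun s => v₁ * Real.exp (v₁ * s) := by
    rw [show x₉ v₁ = fun t => Real.exp (v₁ * t) from rfl]; simpa using dexp9 1 v₁
  have hx2 : deriv (deriv (x₉ v₁)) = fun s => v₁ * v₁ * Real.exp (v₁ * s) := by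
    rw [hx1]; simpa using dexp9 v₁ v₁
  have hx3 : deriv (deriv (deriv (x₉ v₁))) = fun s => v₁ * v₁ * v₁ * Real.exp (v₁ * s) := by
    rw [hx2]; simpa using dexp9 (v₁ * v₁) v₁
  have hy1 : deriv (y₉ v₂) = fun s => v₂ * Real.exp (v₂ * s) := by
    rw [show y₉ v₂ = fun t => Real.exp (v₂ * t) from rfl]; simpa using dexp9 1 v₂
  have hy2 : deriv (deriv (y₉ v₂)) = fun s => v₂ * v₂ * Real.exp (v₂ * s) := by
    rw [hy1]; simpa using dexp9 v₂ v₂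
  have hy3 : deriv (deriv (deriv (y₉ v₂))) = fun s => v₂ * v₂ * v₂ * Real.exp (v₂ * s) := by
    rw [hy2]; simpa using dexp9 (v₂ * v₂) v₂
  have hz1 : deriv (z₉ v₁ v₂) = fun s => w * Real.exp (w * s) := by
    rw [show z₉ v₁ v₂ = fun t => Real.exp (w * t) from rfl]; simpa using dexp9 1 w
  have hz2 : deriv (deriv (z₉ v₁ v₂)) = fun s => w * w * Real.exp (w * s) := by
    rw [hz1]; simpa using dexp9 w w
  have hz3 : deriv (deriv (deriv (z₉ v₁ v₂))) = fun s => w * w * w * Real.exp (w * s) := by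
    rw [hz2]; simpa using dexp9 (w * w) w
  have hE : Real.exp (w * t) = (Real.exp (v₁ * t) * Real.exp (v₂ * t))⁻¹ := by
    rw [← Real.exp_add, ← Real.exp_neg, hw]; ring_nf
  simp only [W3, Matrix.det_fin_three, Matrix.cons_val', Matrix.cons_val_zero,
    Matrix.cons_val_one, Matrix.head_cons, Matrix.head_fin_const, Matrix.cons_val_fin_one,
    Matrix.empty_val', Matrix.cons_val_two, Matrix.tail_cons, Matrix.of_apply, Matrix.cons_val]
  rw [hx3, hy3, hz3, hx2, hy2, hz2, hx1, hy1, hz1]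
  simp only [x₉, y₉, z₉, hE, hw]
  rw [show Real.exp (-(v₁ + v₂) * t) = (Real.exp (v₁ * t) * Real.exp (v₂ * t))⁻¹ from hE]
  have hx := Real.exp_ne_zero (v₁ * t)
  have hy := Real.exp_ne_zero (v₂ * t)
  have hb' : v₁ * 2 + v₂ ≠ 0 := by rw [mul_comm]; exact hb
  have hc' : v₁ + v₂ * 2 ≠ 0 := by rw [mul_comm]; exact hc
  field_simp
  ring
end
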